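/- Under the FIFO property, removing any intermediate node from a route and connecting its neighbors directly does not increase the arrival times at all subsequent nodes, provided the time-dependent cost additionally satisfies the time-dependent triangle inequality: departing i at time t and traveling directly to j arrives no later than traveling i→l→j departing at time t. -/
import Mathlib


/-- Under the FIFO property and the time-dependent triangle inequality, deleting an
intermediate node `R (p+1)` from a route does not increase the arrival time at any
subsequent node. -/
theorem fifo_deletion_no_later_arrivals {V : Type*} (C : V → V → ℝ → ℝ)
    (hnn : ∀ i j t, 0 ≤ C i j t)
    (hfifo : ∀ i j s t, s ≤ t → s + C i j s ≤ t + C i j t)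
    (htri : ∀ i j l t, t + C i j t ≤ (t + C i l t) + C l j (t + C i l t))
    (R : ℕ → V) (s : ℝ) (p : ℕ)
    (R' : ℕ → V) (hR' : ∀ a, R' a = if a ≤ p then R a else R (a + 1))
    (k k' : ℕ → ℝ) (hk0 : k 0 = s) (hk'0 : k' 0 = s)
    (hk : ∀ a, k (a + 1) = k a + C (R a) (R (a + 1)) (k a))
    (hk' : ∀ a, k' (a + 1) = k' a + C (R' a) (R' (a + 1)) (k' a)) :
    ∀ a, (a ≤ p → k' a = k a) ∧ (p < a → k' a ≤ k (a + 1)) := by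
  intro a
  induction a with
  | zero =>
    constructor
    · intro _; rw [hk0, hk'0]
    · intro h
      rw [hk'0, ← hk0, hk 0]
      linarith [hnn (R 0) (R 1) (k 0)]
  | succ n ih =>
    constructor
    · intro h
      have hn : n ≤ p := Nat.le_of_succ_le h
      have heq := ih.1 hn
      rw [hk' n, hk n, heq, hR' n, hR' (n+1), if_pos hn, if_pos h]
    · intro h
      rcases Nat.lt_or_ge p n with hpn | hpn
      · -- n > p : use induction hypothesis k' n ≤ k (n+1) and FIFO
        have hle := ih.2 hpn
        rw [hk' n, hk (n+1), hR' n, hR' (n+1),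
          if_neg (Nat.not_le.mpr hpn), if_neg (Nat.not_le.mpr (Nat.lt_succ_of_lt hpn))]
        exact hfifo (R (n+1)) (R (n+2)) (k' n) (k (n+1)) hle
      · -- n = p
        have hnp : n = p := Nat.le_antisymm hpn (Nat.lt_succ_iff.mp h)
        subst hnp
        have heq := ih.1 le_rfl
        rw [hk' n, heq, hR' n, hR' (n+1), if_pos le_rfl,
          if_neg (Nat.not_le.mpr (Nat.lt_succ_self n))]
        have := htri (R n) (R (n+2)) (R (n+1)) (k n)
        rw [hk (n+1), hk n]
        linarith
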